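/- Let w : ℝⁿ → ℝ be a C¹ function with bounded sup norm, and let φ : ℝⁿ → ℝ be a C¹ compactly supported function. Then ∫ φ² (1+|dw|²)^{1/2} dx ≤ ∫ φ² dx + ‖w‖_∞ ∫ |d(φ²)| dx + ‖w‖_∞ ∫ φ² |H| dx, where H = -div( dw / (1+|dw|²)^{1/2} ) is the mean curvature of the graph of w. -/

import Mathlib

open MeasureTheory

/-- The `i`-th partial derivative of `f : ℝⁿ → ℝ`. -/
noncomputable def partialDeriv' (n : ℕ) (f : EuclideanSpace ℝ (Fin n) → ℝ) (i : Fin n)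
    (x : EuclideanSpace ℝ (Fin n)) : ℝ :=
  fderiv ℝ f x (EuclideanSpace.single i 1)

/-- The squared length `|df|²` of the gradient of `f : ℝⁿ → ℝ`. -/
noncomputable def gradSq (n : ℕ) (f : EuclideanSpace ℝ (Fin n) → ℝ)
    (x : EuclideanSpace ℝ (Fin n)) : ℝ :=
  ∑ i, (partialDeriv' n f i x) ^ 2

/-- The mean curvature `H = -div(df/√(1+|df|²))` of the graph of `f : ℝⁿ → ℝ`. -/
noncomputable def meanCurv (n : ℕ) (f : EuclideanSpace ℝ (Fin n) → ℝ)
    (x : EuclideanSpace ℝ (Fin n)) : ℝ :=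
  -∑ i, partialDeriv' n (fun y => partialDeriv' n f i y / Real.sqrt (1 + gradSq n f y)) i x

noncomputable def Vfield (n : ℕ) (w : EuclideanSpace ℝ (Fin n) → ℝ) (i : Fin n)
    (x : EuclideanSpace ℝ (Fin n)) : ℝ :=
  partialDeriv' n w i x / Real.sqrt (1 + gradSq n w x)

lemma meanCurv_eq (n : ℕ) (w : EuclideanSpace ℝ (Fin n) → ℝ) (x : EuclideanSpace ℝ (Fin n)) :
    ∑ i, fderiv ℝ (Vfield n w i) x (EuclideanSpace.single i 1) = - meanCurv n w x := by
  simp only [meanCurv, neg_neg]; rfl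

section smooth
variable {n : ℕ} {w : EuclideanSpace ℝ (Fin n) → ℝ}

lemma gradSq_nonneg (x : EuclideanSpace ℝ (Fin n)) : 0 ≤ gradSq n w x :=
  Finset.sum_nonneg fun i _ => sq_nonneg _

lemma sqrt_pos' (x : EuclideanSpace ℝ (Fin n)) : 0 < Real.sqrt (1 + gradSq n w x) :=
  Real.sqrt_pos.2 (by have := gradSq_nonneg (w := w) x; linarith)

lemma one_le_sqrt' (x : EuclideanSpace ℝ (Fin n)) : 1 ≤ Real.sqrt (1 + gradSq n w x) :=
  Real.one_le_sqrt.2 (by have := gradSq_nonneg (w := w) x; linarith)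

lemma contDiff_pd (hw : ContDiff ℝ 2 w) (i : Fin n) :
    ContDiff ℝ 1 (fun x => partialDeriv' n w i x) :=
  (hw.fderiv_right (m := 1) (by norm_num)).clm_apply contDiff_const

lemma contDiff_gradSq (hw : ContDiff ℝ 2 w) : ContDiff ℝ 1 (fun x => gradSq n w x) :=
  ContDiff.sum fun i _ => (contDiff_pd hw i).pow 2

lemma contDiff_sqrtTerm (hw : ContDiff ℝ 2 w) :
    ContDiff ℝ 1 (fun x => Real.sqrt (1 + gradSq n w x)) :=
  (contDiff_const.add (contDiff_gradSq hw)).sqrt fun x =>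
    (by have := gradSq_nonneg (w := w) x; positivity)

lemma contDiff_V (hw : ContDiff ℝ 2 w) (i : Fin n) : ContDiff ℝ 1 (Vfield n w i) :=
  (contDiff_pd hw i).div (contDiff_sqrtTerm hw) fun x => (sqrt_pos' x).ne'

lemma cont_fderiv_apply {g : EuclideanSpace ℝ (Fin n) → ℝ} (hg : ContDiff ℝ 1 g)
    (v : EuclideanSpace ℝ (Fin n)) : Continuous fun x => fderiv ℝ g x v :=
  ((hg.fderiv_right (m := 0) (by norm_num)).clm_apply contDiff_const).continuous

end smooth

lemma apply_le_opNorm_of_sum_sq_le_one {n : ℕ} (L : EuclideanSpace ℝ (Fin n) →L[ℝ] ℝ)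
    (c : Fin n → ℝ) (hc : ∑ i, (c i)^2 ≤ 1) :
    |∑ i, L (EuclideanSpace.single i 1) * c i| ≤ ‖L‖ := by
  set u : EuclideanSpace ℝ (Fin n) := ∑ i, c i • EuclideanSpace.single i (1:ℝ) with hu
  have hLu : L u = ∑ i, L (EuclideanSpace.single i 1) * c i := by
    rw [hu, map_sum]
    simp [mul_comm]
  have horth : Orthonormal ℝ (fun i : Fin n => EuclideanSpace.single i (1:ℝ)) := by
    have h := (EuclideanSpace.basisFun (Fin n) ℝ).orthonormal
    have he : (fun i : Fin n => EuclideanSpace.single i (1:ℝ)) =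
        ⇑(EuclideanSpace.basisFun (Fin n) ℝ) := by
      funext i; simp [EuclideanSpace.basisFun_apply]
    rw [he]; exact h
  have h2 : (inner ℝ u u : ℝ) = ∑ i, c i * c i := by
    simpa [hu] using horth.inner_sum c c Finset.univ
  have hn2 : ‖u‖^2 ≤ 1 := by
    rw [← real_inner_self_eq_norm_sq, h2]
    simpa [pow_two] using hc
  have hnorm : ‖u‖ ≤ 1 := by nlinarith [norm_nonneg u]
  calc |∑ i, L (EuclideanSpace.single i 1) * c i| = ‖L u‖ := by rw [hLu, Real.norm_eq_abs]
    _ ≤ ‖L‖ * ‖u‖ := L.le_opNorm u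
    _ ≤ ‖L‖ := by nlinarith [norm_nonneg L]

/-- Area bound for graphs: if `w : ℝⁿ → ℝ` is C² with `|w| ≤ M` and `φ` is C¹ with
compact support, then
`∫ φ²√(1+|dw|²) ≤ ∫ φ² + M ∫ |d(φ²)| + M ∫ φ²|H|` where `H` is the mean curvature of
the graph of `w`. -/
theorem graph_area_bound (n : ℕ) (w φ : EuclideanSpace ℝ (Fin n) → ℝ) (M : ℝ)
    (hw : ContDiff ℝ 2 w) (hM : ∀ x, |w x| ≤ M)
    (hφ : ContDiff ℝ 1 φ) (hsupp : HasCompactSupport φ) :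
    (∫ x, (φ x) ^ 2 * Real.sqrt (1 + gradSq n w x)) ≤
      (∫ x, (φ x) ^ 2) + M * (∫ x, ‖fderiv ℝ (fun y => (φ y) ^ 2) x‖)
        + M * (∫ x, (φ x) ^ 2 * |meanCurv n w x|) := by
  classical
  have hM0 : 0 ≤ M := le_trans (abs_nonneg _) (hM 0)
  have hw1 : ContDiff ℝ 1 w := hw.of_le one_le_two
  have hψ : ContDiff ℝ 1 (fun x => φ x ^ 2) := hφ.pow 2
  have hψsupp : HasCompactSupport (fun x => φ x ^ 2) := by
    have h : (fun x => φ x ^ 2) = (fun x => φ x * φ x) := by funext x; ring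
    rw [h]; exact hsupp.mul_right
  have hf : ContDiff ℝ 1 (fun x => φ x ^ 2 * w x) := hψ.mul hw1
  have hfsupp : HasCompactSupport (fun x => φ x ^ 2 * w x) := hψsupp.mul_right
  have intCC : ∀ {u : EuclideanSpace ℝ (Fin n) → ℝ}, Continuous u → HasCompactSupport u →
      Integrable u := fun hc hs => hc.integrable_of_hasCompactSupport hs
  have hVC : ∀ i, Continuous (Vfield n w i) := fun i => (contDiff_V hw i).continuous
  have hVsq : ∀ x, ∑ i, (Vfield n w i x)^2 ≤ 1 := by
    intro x
    have hg0 := gradSq_nonneg (w := w) x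
    have hs2 : Real.sqrt (1 + gradSq n w x) ^ 2 = 1 + gradSq n w x :=
      Real.sq_sqrt (by linarith)
    have hh : ∑ i, (Vfield n w i x)^2 = gradSq n w x / (1 + gradSq n w x) := by
      simp only [Vfield, div_pow, hs2, ← Finset.sum_div]
      rfl
    rw [hh, div_le_one (by linarith)]
    linarith
  have I1 : ∀ i : Fin n, Integrable (fun x =>
      (φ x ^ 2 * w x) * fderiv ℝ (Vfield n w i) x (EuclideanSpace.single i 1)) :=
    fun i => intCC (hf.continuous.mul (cont_fderiv_apply (contDiff_V hw i) _)) hfsupp.mul_right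
  have I2 : ∀ i : Fin n, Integrable (fun x =>
      fderiv ℝ (fun y => φ y ^ 2 * w y) x (EuclideanSpace.single i 1) * Vfield n w i x) :=
    fun i => intCC ((cont_fderiv_apply hf _).mul (hVC i))
      ((HasCompactSupport.fderiv_apply ℝ hfsupp (EuclideanSpace.single i 1)).mul_right)
  have I3 : ∀ i : Fin n, Integrable (fun x => (φ x ^ 2 * w x) * Vfield n w i x) :=
    fun i => intCC (hf.continuous.mul (hVC i)) hfsupp.mul_right
  have ibp : ∀ i : Fin n,
      ∫ x, (φ x ^ 2 * w x) * fderiv ℝ (Vfield n w i) x (EuclideanSpace.single i 1)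
        = - ∫ x, fderiv ℝ (fun y => φ y ^ 2 * w y) x (EuclideanSpace.single i 1)
            * Vfield n w i x := fun i =>
    integral_mul_fderiv_eq_neg_fderiv_mul_of_integrable (I2 i) (I1 i) (I3 i)
      (fun x _ => hf.differentiable one_ne_zero x)
      (fun x _ => (contDiff_V hw i).differentiable one_ne_zero x)
  have sum_ibp :
      ∫ x, (φ x ^ 2 * w x) * (∑ i, fderiv ℝ (Vfield n w i) x (EuclideanSpace.single i 1))
        = - ∫ x, (∑ i, fderiv ℝ (fun y => φ y ^ 2 * w y) x (EuclideanSpace.single i 1)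
            * Vfield n w i x) := by
    calc ∫ x, (φ x ^ 2 * w x) * (∑ i, fderiv ℝ (Vfield n w i) x (EuclideanSpace.single i 1))
        = ∫ x, ∑ i, (φ x ^ 2 * w x) * fderiv ℝ (Vfield n w i) x (EuclideanSpace.single i 1) := by
          congr 1; funext x; rw [Finset.mul_sum]
      _ = ∑ i, ∫ x, (φ x ^ 2 * w x) * fderiv ℝ (Vfield n w i) x (EuclideanSpace.single i 1) :=
          integral_finset_sum _ (fun i _ => I1 i)
      _ = ∑ i, - ∫ x, fderiv ℝ (fun y => φ y ^ 2 * w y) x (EuclideanSpace.single i 1)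
            * Vfield n w i x := Finset.sum_congr rfl (fun i _ => ibp i)
      _ = - ∑ i, ∫ x, fderiv ℝ (fun y => φ y ^ 2 * w y) x (EuclideanSpace.single i 1)
            * Vfield n w i x := by rw [Finset.sum_neg_distrib]
      _ = - ∫ x, (∑ i, fderiv ℝ (fun y => φ y ^ 2 * w y) x (EuclideanSpace.single i 1)
            * Vfield n w i x) := by rw [integral_finset_sum _ (fun i _ => I2 i)]
  have hR : ∀ x, (∑ i, fderiv ℝ (fun y => φ y ^ 2 * w y) x (EuclideanSpace.single i 1)
        * Vfield n w i x)
      = w x * (∑ i, fderiv ℝ (fun y => φ y ^ 2) x (EuclideanSpace.single i 1) * Vfield n w i x)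
        + φ x ^ 2 * (gradSq n w x / Real.sqrt (1 + gradSq n w x)) := by
    intro x
    have hdm : ∀ i : Fin n, fderiv ℝ (fun y => φ y ^ 2 * w y) x (EuclideanSpace.single i 1)
        = φ x ^ 2 * fderiv ℝ w x (EuclideanSpace.single i 1)
          + w x * fderiv ℝ (fun y => φ y ^ 2) x (EuclideanSpace.single i 1) := by
      intro i
      rw [fderiv_fun_mul (hψ.differentiable one_ne_zero x) (hw1.differentiable one_ne_zero x)]
      simp
    have step : ∀ i : Fin n, fderiv ℝ (fun y => φ y ^ 2 * w y) x (EuclideanSpace.single i 1)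
          * Vfield n w i x
        = w x * (fderiv ℝ (fun y => φ y ^ 2) x (EuclideanSpace.single i 1) * Vfield n w i x)
          + φ x ^ 2 * ((fderiv ℝ w x (EuclideanSpace.single i 1)) ^ 2)
              / Real.sqrt (1 + gradSq n w x) := by
      intro i
      rw [hdm i]
      have hV : Vfield n w i x = fderiv ℝ w x (EuclideanSpace.single i 1)
          / Real.sqrt (1 + gradSq n w x) := rfl
      rw [hV]; ring
    rw [Finset.sum_congr rfl (fun i _ => step i), Finset.sum_add_distrib, ← Finset.mul_sum,
      ← Finset.sum_div, ← Finset.mul_sum]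
    have hG : (∑ i, (fderiv ℝ w x (EuclideanSpace.single i 1)) ^ 2) = gradSq n w x := rfl
    rw [hG, mul_div_assoc]
  have hQint : Integrable (fun x => φ x ^ 2 * (gradSq n w x / Real.sqrt (1 + gradSq n w x))) := by
    refine intCC (hψ.continuous.mul ?_) hψsupp.mul_right
    exact ((contDiff_gradSq hw).continuous).div ((contDiff_sqrtTerm hw).continuous)
      (fun x => (sqrt_pos' x).ne')
  have hSC : Continuous (fun x => ∑ i, fderiv ℝ (fun y => φ y ^ 2) x (EuclideanSpace.single i 1)
      * Vfield n w i x) :=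
    continuous_finset_sum _ (fun i _ => (cont_fderiv_apply hψ _).mul (hVC i))
  have hSsupp : HasCompactSupport (fun x => ∑ i, fderiv ℝ (fun y => φ y ^ 2) x
      (EuclideanSpace.single i 1) * Vfield n w i x) := by
    apply (hψsupp.fderiv (𝕜 := ℝ)).mono
    intro x hx
    simp only [Function.mem_support] at hx ⊢
    intro h0
    apply hx
    refine Finset.sum_eq_zero fun i _ => ?_
    rw [h0]
    simp
  have hwS_int : Integrable (fun x => w x * (∑ i, fderiv ℝ (fun y => φ y ^ 2) x
      (EuclideanSpace.single i 1) * Vfield n w i x)) :=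
    intCC (hw1.continuous.mul hSC) hSsupp.mul_left
  have hHC : Continuous (fun x => meanCurv n w x) := by
    have h : (fun x => meanCurv n w x)
        = fun x => -∑ i, fderiv ℝ (Vfield n w i) x (EuclideanSpace.single i 1) := by
      funext x; rw [meanCurv_eq]; ring
    rw [h]
    exact (continuous_finset_sum _ fun i _ => cont_fderiv_apply (contDiff_V hw i) _).neg
  have hfH_int : Integrable (fun x => (φ x ^ 2 * w x) * meanCurv n w x) :=
    intCC (hf.continuous.mul hHC) hfsupp.mul_right
  have key : ∫ x, φ x ^ 2 * (gradSq n w x / Real.sqrt (1 + gradSq n w x))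
      = (- ∫ x, w x * (∑ i, fderiv ℝ (fun y => φ y ^ 2) x (EuclideanSpace.single i 1)
          * Vfield n w i x))
        + ∫ x, (φ x ^ 2 * w x) * meanCurv n w x := by
    have hL : ∫ x, (φ x ^ 2 * w x) * (∑ i, fderiv ℝ (Vfield n w i) x (EuclideanSpace.single i 1))
        = - ∫ x, (φ x ^ 2 * w x) * meanCurv n w x := by
      rw [← integral_neg]
      congr 1; funext x; rw [meanCurv_eq]; ring
    have hR' : ∫ x, (∑ i, fderiv ℝ (fun y => φ y ^ 2 * w y) x (EuclideanSpace.single i 1)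
          * Vfield n w i x)
        = (∫ x, w x * (∑ i, fderiv ℝ (fun y => φ y ^ 2) x (EuclideanSpace.single i 1)
            * Vfield n w i x))
          + ∫ x, φ x ^ 2 * (gradSq n w x / Real.sqrt (1 + gradSq n w x)) := by
      rw [← integral_add hwS_int hQint]
      congr 1; funext x; exact hR x
    have hs := sum_ibp
    rw [hL, hR'] at hs
    linarith
  have hdψnorm_int : Integrable (fun x => ‖fderiv ℝ (fun y => φ y ^ 2) x‖) :=
    intCC (hψ.continuous_fderiv one_ne_zero).norm (hψsupp.fderiv (𝕜 := ℝ)).norm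
  have hψabsH_int : Integrable (fun x => M * (φ x ^ 2 * |meanCurv n w x|)) :=
    (intCC (hψ.continuous.mul hHC.abs) hψsupp.mul_right).const_mul M
  have hb3 : ∫ x, (φ x ^ 2 * w x) * meanCurv n w x
      ≤ M * ∫ x, φ x ^ 2 * |meanCurv n w x| := by
    rw [← integral_const_mul]
    refine integral_mono hfH_int hψabsH_int ?_
    intro x
    have h0 : w x * meanCurv n w x ≤ M * |meanCurv n w x| :=
      (le_abs_self _).trans (by
        rw [abs_mul]; exact mul_le_mul_of_nonneg_right (hM x) (abs_nonneg _))
    calc (φ x ^ 2 * w x) * meanCurv n w x = φ x ^ 2 * (w x * meanCurv n w x) := by ring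
      _ ≤ φ x ^ 2 * (M * |meanCurv n w x|) := mul_le_mul_of_nonneg_left h0 (sq_nonneg _)
      _ = M * (φ x ^ 2 * |meanCurv n w x|) := by ring
  have hb2 : - (∫ x, w x * (∑ i, fderiv ℝ (fun y => φ y ^ 2) x (EuclideanSpace.single i 1)
        * Vfield n w i x))
      ≤ M * ∫ x, ‖fderiv ℝ (fun y => φ y ^ 2) x‖ := by
    rw [← integral_neg, ← integral_const_mul]
    refine integral_mono hwS_int.neg (hdψnorm_int.const_mul M) ?_
    intro x
    have hS : |∑ i, fderiv ℝ (fun y => φ y ^ 2) x (EuclideanSpace.single i 1) * Vfield n w i x|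
        ≤ ‖fderiv ℝ (fun y => φ y ^ 2) x‖ :=
      apply_le_opNorm_of_sum_sq_le_one _ _ (hVsq x)
    calc -(w x * (∑ i, fderiv ℝ (fun y => φ y ^ 2) x (EuclideanSpace.single i 1)
          * Vfield n w i x))
        ≤ |w x * (∑ i, fderiv ℝ (fun y => φ y ^ 2) x (EuclideanSpace.single i 1)
          * Vfield n w i x)| := neg_le_abs _
      _ = |w x| * |∑ i, fderiv ℝ (fun y => φ y ^ 2) x (EuclideanSpace.single i 1)
          * Vfield n w i x| := abs_mul _ _
      _ ≤ M * ‖fderiv ℝ (fun y => φ y ^ 2) x‖ :=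
          mul_le_mul (hM x) hS (abs_nonneg _) hM0
  have hψint : Integrable (fun x => φ x ^ 2) := intCC hψ.continuous hψsupp
  have hsqrt_int : Integrable (fun x => φ x ^ 2 * Real.sqrt (1 + gradSq n w x)) :=
    intCC (hψ.continuous.mul (contDiff_sqrtTerm hw).continuous) hψsupp.mul_right
  have hb1 : ∫ x, φ x ^ 2 * Real.sqrt (1 + gradSq n w x)
      ≤ (∫ x, φ x ^ 2) + ∫ x, φ x ^ 2 * (gradSq n w x / Real.sqrt (1 + gradSq n w x)) := by
    rw [← integral_add hψint hQint]
    refine integral_mono hsqrt_int (hψint.add hQint) ?_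
    intro x
    have hg0 := gradSq_nonneg (w := w) x
    have h1 : (1:ℝ) ≤ Real.sqrt (1 + gradSq n w x) := one_le_sqrt' x
    have hmul : Real.sqrt (1 + gradSq n w x) * Real.sqrt (1 + gradSq n w x)
        = 1 + gradSq n w x := Real.mul_self_sqrt (by linarith)
    have hkey : Real.sqrt (1 + gradSq n w x)
        ≤ 1 + gradSq n w x / Real.sqrt (1 + gradSq n w x) := by
      rw [← sub_nonneg]
      have heq : 1 + gradSq n w x / Real.sqrt (1 + gradSq n w x)
            - Real.sqrt (1 + gradSq n w x)
          = (Real.sqrt (1 + gradSq n w x) - 1) / Real.sqrt (1 + gradSq n w x) := by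
        field_simp
        linear_combination -hmul
      rw [heq]
      exact div_nonneg (by linarith) (by linarith)
    calc φ x ^ 2 * Real.sqrt (1 + gradSq n w x)
        ≤ φ x ^ 2 * (1 + gradSq n w x / Real.sqrt (1 + gradSq n w x)) :=
          mul_le_mul_of_nonneg_left hkey (sq_nonneg _)
      _ = φ x ^ 2 + φ x ^ 2 * (gradSq n w x / Real.sqrt (1 + gradSq n w x)) := by ring
  have hfinal := hb1
  rw [key] at hfinal
  linarith
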